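/- Let K be a ∂-field of characteristic p > 0 and let p be a prime ∂-ideal of the ∂-polynomial ring K{y_1,…,y_m}. Then there exists a point ξ = (ξ_1,…,ξ_m) in a ∂-extension field of K such that p = { f ∈ K{y_1,…,y_m} : f(ξ) = 0 }. -/

import Mathlib

universe u

/-- A differential ring structure (hyperdifferential operators) on a commutative ring. -/
structure HyperDiff (R : Type*) [CommRing R] where
  D : ℕ → R → R
  map_add : ∀ j a b, D j (a + b) = D j a + D j b
  d_zero : ∀ a, D 0 a = a
  leibniz : ∀ j a b, D j (a * b) = ∑ i ∈ Finset.range (j + 1), D i a * D (j - i) b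
  comp : ∀ k j a, D k (D j a) = (k + j).choose j • D (k + j) a

open PowerSeries Finset

namespace HyperDiff

variable {R : Type*} [CommRing R] (D : HyperDiff R)

lemma D_zero' (j : ℕ) : D.D j 0 = 0 := by
  have h := D.map_add j 0 0
  rw [add_zero] at h
  exact right_eq_add.mp h

lemma D_one (j : ℕ) : D.D j 1 = if j = 0 then 1 else 0 := by
  induction j using Nat.strong_induction_on with
  | _ j ih =>
    match j with
    | 0 => simp [D.d_zero]
    | n + 1 =>
      have h := D.leibniz (n + 1) 1 1
      rw [mul_one, Finset.sum_range_succ, Finset.sum_range_succ'] at h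
      have hmid : ∀ i ∈ Finset.range n, D.D (i + 1) 1 * D.D (n + 1 - (i + 1)) 1 = 0 := by
        intro i hi
        have : i < n := Finset.mem_range.mp hi
        rw [ih (i + 1) (by omega)]
        simp [Nat.succ_ne_zero]
      rw [Finset.sum_eq_zero hmid] at h
      simp only [D.d_zero, Nat.sub_zero, Nat.sub_self, one_mul, mul_one, zero_add] at h
      -- h : D (n+1) 1 = D (n+1) 1 + D (n+1) 1
      have := right_eq_add.mp h
      simp [this]

/-- The generating power series ring homomorphism of a hyperdifferential structure. -/
def gen : R →+* PowerSeries R where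
  toFun a := PowerSeries.mk fun j => D.D j a
  map_one' := by
    ext j
    simp [coeff_mk, D.D_one, PowerSeries.coeff_one]
  map_mul' a b := by
    ext j
    show coeff j (PowerSeries.mk fun j => D.D j (a * b)) = coeff j ((PowerSeries.mk fun j => D.D j a) * PowerSeries.mk fun j => D.D j b)
    rw [PowerSeries.coeff_mul, Finset.Nat.sum_antidiagonal_eq_sum_range_succ_mk]
    simp [coeff_mk, D.leibniz]
  map_zero' := by
    ext j
    simp [coeff_mk, D.D_zero']
  map_add' a b := by
    ext j
    simp [coeff_mk, D.map_add]

end HyperDiff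

namespace HyperDiff

variable {R : Type*} [CommRing R] (D : HyperDiff R)

@[simp] lemma coeff_gen (j : ℕ) (a : R) : coeff j (D.gen a) = D.D j a :=
  show coeff j (PowerSeries.mk fun j => D.D j a) = D.D j a from coeff_mk _ _

lemma constantCoeff_gen (a : R) : constantCoeff (D.gen a) = a := by
  rw [← PowerSeries.coeff_zero_eq_constantCoeff, coeff_gen, D.d_zero]

end HyperDiff

section BinomShift

variable {R : Type*} [CommRing R]

/-- The ring homomorphism `R⟦u⟧ → R⟦s⟧⟦t⟧` given by substituting `u ↦ t + s`. -/
noncomputable def binomShift : R⟦X⟧ →+* (PowerSeries R)⟦X⟧ where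
  toFun F := PowerSeries.mk fun j => PowerSeries.mk fun k =>
    (k + j).choose j • coeff (k + j) F
  map_one' := by
    ext j k
    simp only [coeff_mk, PowerSeries.coeff_one]
    rcases Nat.eq_zero_or_pos j with hj | hj
    · subst hj
      simp [PowerSeries.coeff_one]
    · have : ¬ (k + j = 0) := by omega
      have hj' : j ≠ 0 := by omega
      simp [this, hj']
  map_mul' F G := by
    ext j k
    simp only [coeff_mk, PowerSeries.coeff_mul, map_sum, Finset.smul_sum]
    calc
      ∑ s ∈ Finset.HasAntidiagonal.antidiagonal (k + j),
          (k + j).choose j • (coeff s.1 F * coeff s.2 G)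
        = ∑ s ∈ Finset.HasAntidiagonal.antidiagonal (k + j), ∑ q ∈ Finset.HasAntidiagonal.antidiagonal j,
            (s.1.choose q.1 * s.2.choose q.2) • (coeff s.1 F * coeff s.2 G) := by
          refine Finset.sum_congr rfl fun s hs => ?_
          rw [← Finset.sum_smul]
          congr 1
          have hs' : s.1 + s.2 = k + j := Finset.HasAntidiagonal.mem_antidiagonal.mp hs
          rw [← hs', Nat.add_choose_eq]
      _ = ∑ q ∈ Finset.HasAntidiagonal.antidiagonal j, ∑ s ∈ Finset.HasAntidiagonal.antidiagonal (k + j),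
            (s.1.choose q.1 * s.2.choose q.2) • (coeff s.1 F * coeff s.2 G) :=
          Finset.sum_comm
      _ = ∑ q ∈ Finset.HasAntidiagonal.antidiagonal j, ∑ r ∈ Finset.HasAntidiagonal.antidiagonal k,
            (((r.1 + q.1).choose q.1 * (r.2 + q.2).choose q.2) •
              (coeff (r.1 + q.1) F * coeff (r.2 + q.2) G)) := by
          refine Finset.sum_congr rfl fun q hq => ?_
          rw [← Finset.sum_filter_of_ne
            (p := fun s : ℕ × ℕ => q.1 ≤ s.1 ∧ q.2 ≤ s.2) (fun s hs hne => ?_)]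
          · refine Finset.sum_nbij' (fun s => (s.1 - q.1, s.2 - q.2))
              (fun r => (r.1 + q.1, r.2 + q.2)) ?_ ?_ ?_ ?_ ?_
            · intro s hs
              simp only [Finset.mem_filter, Finset.HasAntidiagonal.mem_antidiagonal] at hs ⊢
              have hq' : q.1 + q.2 = j := Finset.HasAntidiagonal.mem_antidiagonal.mp hq
              omega
            · intro r hr
              simp only [Finset.mem_filter, Finset.HasAntidiagonal.mem_antidiagonal] at hr ⊢
              have hq' : q.1 + q.2 = j := Finset.HasAntidiagonal.mem_antidiagonal.mp hq
              omega
            · intro s hs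
              simp only [Finset.mem_filter] at hs
              obtain ⟨-, h1, h2⟩ := hs
              simp [Nat.sub_add_cancel h1, Nat.sub_add_cancel h2]
            · intro r hr
              simp
            · intro s hs
              simp only [Finset.mem_filter] at hs
              obtain ⟨-, h1, h2⟩ := hs
              simp [Nat.sub_add_cancel h1, Nat.sub_add_cancel h2]
          · by_contra hcon
            push_neg at hcon
            rcases Nat.lt_or_ge s.1 q.1 with hlt | hge
            · rw [Nat.choose_eq_zero_of_lt hlt, zero_mul, zero_smul] at hne
              exact hne rfl
            · have hlt2 : s.2 < q.2 := by
                by_contra h2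
                exact absurd (show q.1 ≤ s.1 ∧ q.2 ≤ s.2 from ⟨hge, by omega⟩) (by simpa using hcon)
              rw [Nat.choose_eq_zero_of_lt hlt2, mul_zero, zero_smul] at hne
              exact hne rfl
      _ = ∑ q ∈ Finset.HasAntidiagonal.antidiagonal j, ∑ r ∈ Finset.HasAntidiagonal.antidiagonal k,
            ((r.1 + q.1).choose q.1 • coeff (r.1 + q.1) F) *
              ((r.2 + q.2).choose q.2 • coeff (r.2 + q.2) G) := by
          refine Finset.sum_congr rfl fun q _ => Finset.sum_congr rfl fun r _ => ?_
          rw [smul_mul_smul_comm]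
  map_zero' := by
    ext j k; simp [coeff_mk]
  map_add' F G := by
    ext j k; simp [coeff_mk, smul_add]

@[simp] lemma coeff_coeff_binomShift (F : R⟦X⟧) (j k : ℕ) :
    coeff k (coeff j (binomShift F)) =
      (k + j).choose j • coeff (k + j) F := by
  simp [binomShift, coeff_mk]

end BinomShift

section Construction

variable {Q : Type u} [CommRing Q] (D : HyperDiff Q) (I : Ideal Q) [I.IsPrime]
  (hD : ∀ j, ∀ x ∈ I, D.D j x ∈ I)

/-- The generating series homomorphism descended to the quotient by a `D`-stable prime. -/
noncomputable def quotSeries : Q ⧸ I →+* PowerSeries (Q ⧸ I) :=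
  Ideal.Quotient.lift I ((PowerSeries.map (Ideal.Quotient.mk I)).comp D.gen) (by
    intro x hx
    ext j
    simp only [RingHom.comp_apply, PowerSeries.coeff_map, HyperDiff.coeff_gen, map_zero]
    exact Ideal.Quotient.eq_zero_iff_mem.mpr (hD j x hx))

lemma coeff_quotSeries (x : Q) (j : ℕ) :
    coeff j (quotSeries D I hD (Ideal.Quotient.mk I x)) =
      Ideal.Quotient.mk I (D.D j x) := by
  rw [quotSeries, Ideal.Quotient.lift_mk]
  simp [PowerSeries.coeff_map]

lemma constantCoeff_quotSeries (a : Q ⧸ I) :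
    PowerSeries.constantCoeff (quotSeries D I hD a) = a := by
  obtain ⟨x, rfl⟩ := Ideal.Quotient.mk_surjective a
  rw [← PowerSeries.coeff_zero_eq_constantCoeff, coeff_quotSeries, D.d_zero]

lemma comp_quotSeries (a : Q ⧸ I) (j k : ℕ) :
    coeff k (quotSeries D I hD (coeff j (quotSeries D I hD a))) =
      (k + j).choose j • coeff (k + j) (quotSeries D I hD a) := by
  obtain ⟨x, rfl⟩ := Ideal.Quotient.mk_surjective a
  rw [coeff_quotSeries, coeff_quotSeries, coeff_quotSeries, ← map_nsmul, ← D.comp]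

/-- The composite `Q ⧸ I →+* (FractionRing (Q ⧸ I))⟦X⟧`. -/
noncomputable def fracSeries' : Q ⧸ I →+* PowerSeries (FractionRing (Q ⧸ I)) :=
  (PowerSeries.map (algebraMap (Q ⧸ I) (FractionRing (Q ⧸ I)))).comp (quotSeries D I hD)

lemma isUnit_fracSeries' (s : nonZeroDivisors (Q ⧸ I)) : IsUnit (fracSeries' D I hD s) := by
  rw [PowerSeries.isUnit_iff_constantCoeff]
  have h1 : PowerSeries.constantCoeff (fracSeries' D I hD s) =
      algebraMap (Q ⧸ I) (FractionRing (Q ⧸ I)) s := by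
    rw [fracSeries', RingHom.comp_apply]
    rw [← PowerSeries.coeff_zero_eq_constantCoeff]
    rw [PowerSeries.coeff_map, PowerSeries.coeff_zero_eq_constantCoeff,
      constantCoeff_quotSeries]
  rw [h1]
  refine isUnit_iff_ne_zero.mpr fun h => nonZeroDivisors.ne_zero s.2 ?_
  exact IsFractionRing.injective (Q ⧸ I) (FractionRing (Q ⧸ I)) (by simpa using h)

/-- The generating series homomorphism extended to the fraction field. -/
noncomputable def fracSeries : FractionRing (Q ⧸ I) →+* PowerSeries (FractionRing (Q ⧸ I)) :=
  IsLocalization.lift (M := nonZeroDivisors (Q ⧸ I)) (isUnit_fracSeries' D I hD)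

lemma fracSeries_algebraMap (a : Q ⧸ I) :
    fracSeries D I hD (algebraMap (Q ⧸ I) (FractionRing (Q ⧸ I)) a) = fracSeries' D I hD a :=
  IsLocalization.lift_eq _ a

lemma fracSeries_mk (x : Q) (j : ℕ) :
    coeff j
        (fracSeries D I hD (algebraMap (Q ⧸ I) (FractionRing (Q ⧸ I)) (Ideal.Quotient.mk I x)))
      = algebraMap (Q ⧸ I) (FractionRing (Q ⧸ I)) (Ideal.Quotient.mk I (D.D j x)) := by
  rw [fracSeries_algebraMap, fracSeries', RingHom.comp_apply, PowerSeries.coeff_map,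
    coeff_quotSeries]

lemma constantCoeff_fracSeries (x : FractionRing (Q ⧸ I)) :
    PowerSeries.constantCoeff (fracSeries D I hD x) = x := by
  have h : (PowerSeries.constantCoeff).comp (fracSeries D I hD) =
      RingHom.id _ := by
    apply IsLocalization.ringHom_ext (nonZeroDivisors (Q ⧸ I))
    refine RingHom.ext fun a => ?_
    simp only [RingHom.comp_apply, RingHom.id_apply]
    rw [fracSeries_algebraMap]
    rw [fracSeries', RingHom.comp_apply, ← PowerSeries.coeff_zero_eq_constantCoeff,
      PowerSeries.coeff_map, PowerSeries.coeff_zero_eq_constantCoeff, constantCoeff_quotSeries]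
  exact RingHom.congr_fun h x

lemma comp_fracSeries (x : FractionRing (Q ⧸ I)) (j k : ℕ) :
    coeff k (fracSeries D I hD (coeff j (fracSeries D I hD x))) =
      (k + j).choose j • coeff (k + j) (fracSeries D I hD x) := by
  have hΦΨ : (PowerSeries.map (fracSeries D I hD)).comp (fracSeries D I hD) =
      (binomShift (R := FractionRing (Q ⧸ I))).comp (fracSeries D I hD) := by
    apply IsLocalization.ringHom_ext (nonZeroDivisors (Q ⧸ I))
    refine RingHom.ext fun a => ?_
    simp only [RingHom.comp_apply]
    rw [fracSeries_algebraMap]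
    ext n l
    rw [PowerSeries.coeff_map, coeff_coeff_binomShift]
    rw [fracSeries', RingHom.comp_apply, PowerSeries.coeff_map, fracSeries_algebraMap]
    rw [fracSeries', RingHom.comp_apply, PowerSeries.coeff_map, PowerSeries.coeff_map,
      comp_quotSeries, map_nsmul]
  have h := congrArg (fun F => coeff k
    (coeff j F)) (RingHom.congr_fun hΦΨ x)
  simpa only [RingHom.comp_apply, PowerSeries.coeff_map, coeff_coeff_binomShift,
    map_nsmul] using h

set_option synthInstance.maxHeartbeats 1000000 in
set_option maxHeartbeats 1000000 in
/-- The induced hyperdifferential structure on the fraction field of the quotient. -/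
noncomputable def fracHyperDiff : HyperDiff (FractionRing (Q ⧸ I)) where
  D j x := coeff j (fracSeries D I hD x)
  map_add j a b := by
    show coeff j (fracSeries D I hD (a + b)) =
      coeff j (fracSeries D I hD a) + coeff j (fracSeries D I hD b)
    rw [map_add, map_add]
  d_zero a := by
    show coeff 0 (fracSeries D I hD a) = a
    rw [PowerSeries.coeff_zero_eq_constantCoeff]
    exact constantCoeff_fracSeries D I hD a
  leibniz j a b := by
    show coeff j (fracSeries D I hD (a * b)) = _
    rw [map_mul, PowerSeries.coeff_mul, Finset.Nat.sum_antidiagonal_eq_sum_range_succ_mk]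
  comp k j a := comp_fracSeries D I hD a j k

lemma fracHyperDiff_mk (x : Q) (j : ℕ) :
    (fracHyperDiff D I hD).D j (algebraMap (Q ⧸ I) (FractionRing (Q ⧸ I)) (Ideal.Quotient.mk I x))
      = algebraMap (Q ⧸ I) (FractionRing (Q ⧸ I)) (Ideal.Quotient.mk I (D.D j x)) :=
  fracSeries_mk D I hD x j

end Construction


/-- A ∂-extension field of a ∂-field `K`: a field extension `L/K` carrying a
∂-structure compatible with that of `K`. -/
structure DiffExtension (K : Type u) [Field K] (DK : HyperDiff K) : Type (u + 1) where
  L : Type u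
  [fieldL : Field L]
  [algL : Algebra K L]
  DL : HyperDiff L
  compat : ∀ j a, DL.D j (algebraMap K L a) = algebraMap K L (DK.D j a)

attribute [instance] DiffExtension.fieldL DiffExtension.algL

set_option maxHeartbeats 1000000 in
set_option synthInstance.maxHeartbeats 1000000 in
/-- Every prime ∂-ideal `𝔭` of the ∂-polynomial ring
`K{y_1,…,y_m}` (realized as the polynomial ring in the variables `∂^j(y_i)`)
has a generic zero: there is a ∂-extension field of `K` and a point
`ξ = (ξ_1,…,ξ_m)` in it such that `𝔭 = { f : f(ξ) = 0 }`, where evaluation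
substitutes `∂^j(y_i) ↦ ∂^j(ξ_i)`. -/
theorem prime_deltaIdeal_has_generic_zero {K : Type u} [Field K] (p : ℕ) [Fact p.Prime]
    [CharP K p] (m : ℕ) (DK : HyperDiff K)
    (DP : HyperDiff (MvPolynomial (Fin m × ℕ) K))
    (hC : ∀ j a, DP.D j (MvPolynomial.C a) = MvPolynomial.C (DK.D j a))
    (hX : ∀ j i k, DP.D j (MvPolynomial.X ((i, k) : Fin m × ℕ)) =
      ((k + j).choose j : MvPolynomial (Fin m × ℕ) K) * MvPolynomial.X (i, k + j))
    (𝔭 : Ideal (MvPolynomial (Fin m × ℕ) K)) (h𝔭 : 𝔭.IsPrime)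
    (hD𝔭 : ∀ j, ∀ f ∈ 𝔭, DP.D j f ∈ 𝔭) :
    ∃ (E : DiffExtension K DK) (ξ : Fin m → E.L), ∀ f,
      f ∈ 𝔭 ↔ MvPolynomial.eval₂ (algebraMap K E.L) (fun v => E.DL.D v.2 (ξ v.1)) f = 0 := by
  classical
  haveI : 𝔭.IsPrime := h𝔭
  set L := FractionRing (MvPolynomial (Fin m × ℕ) K ⧸ 𝔭) with hLdef
  let ψ : MvPolynomial (Fin m × ℕ) K →+* L :=
    (algebraMap (MvPolynomial (Fin m × ℕ) K ⧸ 𝔭) L).comp (Ideal.Quotient.mk 𝔭)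
  have hψinj : ∀ g, ψ g = 0 → g ∈ 𝔭 := by
    intro g hg
    have : Ideal.Quotient.mk 𝔭 g = 0 := by
      apply IsFractionRing.injective (MvPolynomial (Fin m × ℕ) K ⧸ 𝔭) L
      rw [map_zero]
      exact hg
    exact Ideal.Quotient.eq_zero_iff_mem.mp this
  let algKL : Algebra K L := RingHom.toAlgebra (ψ.comp MvPolynomial.C)
  let DL : HyperDiff L := fracHyperDiff DP 𝔭 hD𝔭
  have hDLψ : ∀ (x : MvPolynomial (Fin m × ℕ) K) (j : ℕ),
      DL.D j (ψ x) = ψ (DP.D j x) := by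
    intro x j
    exact fracHyperDiff_mk DP 𝔭 hD𝔭 x j
  refine ⟨DiffExtension.mk (DK := DK) L (fieldL := inferInstance) (algL := algKL) DL ?_,
    fun i => ψ (MvPolynomial.X (i, 0)), ?_⟩
  · intro j a
    have h1 : algebraMap K L a = ψ (MvPolynomial.C a) := rfl
    have h2 : algebraMap K L (DK.D j a) = ψ (MvPolynomial.C (DK.D j a)) := rfl
    rw [h1, h2, hDLψ, hC]
  · intro f
    have hDLξ : (fun v : Fin m × ℕ => DL.D v.2 (ψ (MvPolynomial.X (v.1, 0))))
        = ψ ∘ MvPolynomial.X := by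
      funext v
      rw [hDLψ, hX v.2 v.1 0]
      simp only [Nat.zero_add, Nat.choose_self, Nat.cast_one, one_mul]
      rfl
    show f ∈ 𝔭 ↔ MvPolynomial.eval₂ (algebraMap K L) _ f = 0
    have halg : algebraMap K L = ψ.comp MvPolynomial.C := rfl
    rw [show (fun v : Fin m × ℕ => DL.D v.2 (ψ (MvPolynomial.X (v.1, 0)))) = ψ ∘ MvPolynomial.X
      from hDLξ, halg, ← MvPolynomial.eval₂_comp_left ψ MvPolynomial.C MvPolynomial.X f,
      MvPolynomial.eval₂_eta]
    constructor
    · intro hf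
      show ((algebraMap (MvPolynomial (Fin m × ℕ) K ⧸ 𝔭) L).comp (Ideal.Quotient.mk 𝔭)) f = 0
      rw [RingHom.comp_apply, Ideal.Quotient.eq_zero_iff_mem.mpr hf, map_zero]
    · exact hψinj f
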